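/- Let F_2 = ⟨x_1,x_2⟩ and F_{n−2} = ⟨x_3,…,x_n⟩ in F_n = F_2 * F_{n−2}. Suppose η̂ ∈ Aut(F_n) restricts to conjugation by a ∈ F_2 on F_2 and to conjugation by w ∈ F_n on F_{n−2}, where w has no nontrivial initial F_2-segment, and suppose the outer class of η̂ has an inverse represented by μ̂ with μ̂|F_2 = conjugation by a' ∈ F_2 and μ̂|F_{n−2} = conjugation by v ∈ F_n beginning in F_{n−2}, with μ̂(w)·v ∈ F_2. Then w ∈ F_{n−2}, and hence η̂ = i_a × i_w ∈ Aut(F_2) × Aut(F_{n−2}). -/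

import Mathlib

/-- The subgroup `F_2 = ⟨x_1, x_2⟩` of `F_n`. -/
def F2sub (n : ℕ) : Subgroup (FreeGroup (Fin n)) :=
  Subgroup.closure (FreeGroup.of '' {i : Fin n | (i : ℕ) < 2})

/-- The subgroup `F_{n-2} = ⟨x_3, …, x_n⟩` of `F_n`. -/
def Fm2sub (n : ℕ) : Subgroup (FreeGroup (Fin n)) :=
  Subgroup.closure (FreeGroup.of '' {i : Fin n | 2 ≤ (i : ℕ)})

/-- `w` has no nontrivial initial segment in the subgroup `A`: there is no
reduced factorization `w = a·w'` (lengths adding) with `1 ≠ a ∈ A`. -/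
def NoInitialSegment {n : ℕ} (A : Subgroup (FreeGroup (Fin n)))
    (w : FreeGroup (Fin n)) : Prop :=
  ∀ a ∈ A, a ≠ 1 → ∀ w' : FreeGroup (Fin n), w = a * w' →
    (FreeGroup.toWord w).length ≠
      (FreeGroup.toWord a).length + (FreeGroup.toWord w').length

namespace SplitOutAux

open FreeGroup List

variable {α : Type*} [DecidableEq α]

/-- Any output of `reduce` is chain-reduced. -/
lemma chain'_reduce (L : List (α × Bool)) :
    List.Chain' (fun a b : α × Bool => ¬(a.1 = b.1 ∧ a.2 = !b.2)) (FreeGroup.reduce L) := by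
  induction L with
  | nil => exact List.isChain_nil
  | cons x L ih =>
    rw [FreeGroup.reduce.cons]
    rcases h : FreeGroup.reduce L with _ | ⟨hd, tl⟩
    · exact List.isChain_singleton _
    · rw [h] at ih
      dsimp only
      split_ifs with hc
      · exact ih.tail
      · exact List.isChain_cons_cons.2 ⟨hc, ih⟩

lemma reduce_eq_self {L : List (α × Bool)}
    (h : List.Chain' (fun a b : α × Bool => ¬(a.1 = b.1 ∧ a.2 = !b.2)) L) :
    FreeGroup.reduce L = L := by
  induction L with
  | nil => rfl
  | cons x L ih =>
    rw [FreeGroup.reduce.cons, ih h.tail]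
    cases L with
    | nil => rfl
    | cons hd tl =>
      dsimp only
      rw [if_neg (List.isChain_cons_cons.1 h).1]

lemma chain'_toWord (x : FreeGroup α) :
    List.Chain' (fun a b : α × Bool => ¬(a.1 = b.1 ∧ a.2 = !b.2)) x.toWord := by
  rw [← FreeGroup.reduce_toWord]
  exact chain'_reduce _

/-- no-cancellation concatenation. -/
lemma toWord_mul_eq (x y : FreeGroup α)
    (h : ∀ a ∈ x.toWord.getLast?, ∀ b ∈ y.toWord.head?, a.1 ≠ b.1) :
    (x * y).toWord = x.toWord ++ y.toWord := by
  conv_lhs => rw [← FreeGroup.mk_toWord (x := x), ← FreeGroup.mk_toWord (x := y)]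
  rw [FreeGroup.mul_mk, FreeGroup.toWord_mk]
  apply reduce_eq_self
  refine List.isChain_append.2 ⟨chain'_toWord x, chain'_toWord y, ?_⟩
  intro a ha b hb hab
  exact h a ha b hb hab.1

/-- Membership in the closure of a set of generators, via letters of the word. -/
lemma mem_closure_word (s : Set α) (x : FreeGroup α) :
    x ∈ Subgroup.closure (FreeGroup.of '' s) ↔ ∀ l ∈ x.toWord, l.1 ∈ s := by
  constructor
  · intro hx
    let K : Subgroup (FreeGroup α) :=
      { carrier := {x : FreeGroup α | ∀ l ∈ x.toWord, l.1 ∈ s}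
        one_mem' := by simp [FreeGroup.toWord_one]
        mul_mem' := by
          intro a b ha hb l hl
          have := (FreeGroup.toWord_mul_sublist a b).subset hl
          rcases List.mem_append.1 this with h' | h'
          · exact ha l h'
          · exact hb l h'
        inv_mem' := by
          intro a ha l hl
          rw [FreeGroup.toWord_inv] at hl
          simp only [FreeGroup.invRev, List.mem_reverse, List.mem_map] at hl
          obtain ⟨g, hg, rfl⟩ := hl
          exact ha g hg }
    refine Subgroup.closure_le K |>.2 ?_ hx
    rintro _ ⟨i, hi, rfl⟩ l hl
    rw [FreeGroup.toWord_of] at hl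
    simp at hl
    subst hl
    exact hi
  · intro hx
    have key : ∀ L : List (α × Bool), (∀ l ∈ L, l.1 ∈ s) →
        FreeGroup.mk L ∈ Subgroup.closure (FreeGroup.of '' s) := by
      intro L
      induction L with
      | nil => intro _; rw [← FreeGroup.one_eq_mk]; exact Subgroup.one_mem _
      | cons l t ih =>
        intro hL
        have : FreeGroup.mk (l :: t) = FreeGroup.mk [l] * FreeGroup.mk t := by
          rw [FreeGroup.mul_mk]; rfl
        rw [this]
        refine Subgroup.mul_mem _ ?_ (ih fun l' hl' => hL l' (List.mem_cons_of_mem _ hl'))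
        have hl : l.1 ∈ s := hL l (List.mem_cons_self)
        rcases l with ⟨i, b⟩
        cases b
        · have : FreeGroup.mk [(i, false)] = (FreeGroup.of i)⁻¹ := by
            rw [show FreeGroup.of i = FreeGroup.mk [(i, true)] from rfl, FreeGroup.inv_mk]
            simp [FreeGroup.invRev]
          rw [this]
          exact Subgroup.inv_mem _ (Subgroup.subset_closure ⟨i, hl, rfl⟩)
        · exact Subgroup.subset_closure ⟨i, hl, rfl⟩
    have := key x.toWord hx
    rwa [FreeGroup.mk_toWord] at this

/-- Splitting an element along `takeWhile`/`dropWhile` of its reduced word. -/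
lemma split_word (x : FreeGroup α) (q : α × Bool → Bool) :
    x = FreeGroup.mk (x.toWord.takeWhile q) * FreeGroup.mk (x.toWord.dropWhile q) ∧
    (FreeGroup.mk (x.toWord.takeWhile q)).toWord = x.toWord.takeWhile q ∧
    (FreeGroup.mk (x.toWord.dropWhile q)).toWord = x.toWord.dropWhile q := by
  have hch := chain'_toWord x
  have happ := List.takeWhile_append_dropWhile (p := q) (l := x.toWord)
  have h2 : List.Chain' (fun a b : α × Bool => ¬(a.1 = b.1 ∧ a.2 = !b.2))
      (x.toWord.takeWhile q ++ x.toWord.dropWhile q) := by rw [happ]; exact hch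
  obtain ⟨c1, c2, -⟩ := List.isChain_append.1 h2
  refine ⟨?_, FreeGroup.toWord_mk.trans (reduce_eq_self c1),
    FreeGroup.toWord_mk.trans (reduce_eq_self c2)⟩
  rw [FreeGroup.mul_mk, happ, FreeGroup.mk_toWord]


/-- product with a nonempty left word and a no-cancellation junction -/
lemma head_mul (x y : FreeGroup α) (hx : x.toWord ≠ [])
    (hj : ∀ a ∈ x.toWord.getLast?, ∀ b ∈ y.toWord.head?, a.1 ≠ b.1) :
    (x * y).toWord ≠ [] ∧ (x * y).toWord.head? = x.toWord.head? := by
  by_cases hy : y.toWord = []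
  · have : y = 1 := FreeGroup.toWord_eq_nil_iff.1 hy
    subst this
    rw [mul_one]
    exact ⟨hx, rfl⟩
  · rw [toWord_mul_eq x y hj]
    constructor
    · simp [hx]
    · rcases h : x.toWord with _ | ⟨a, t⟩
      · exact absurd h hx
      · simp

lemma head?_toWord_inv (x : FreeGroup α) :
    x⁻¹.toWord.head? = x.toWord.getLast?.map (fun l => (l.1, !l.2)) := by
  rw [FreeGroup.toWord_inv]
  simp [FreeGroup.invRev]

lemma getLast?_toWord_inv (x : FreeGroup α) :
    x⁻¹.toWord.getLast? = x.toWord.head?.map (fun l => (l.1, !l.2)) := by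
  rw [FreeGroup.toWord_inv]
  simp [FreeGroup.invRev]

variable {n : ℕ}

lemma mem_F2_iff (x : FreeGroup (Fin n)) :
    x ∈ F2sub n ↔ ∀ l ∈ x.toWord, (l.1 : ℕ) < 2 :=
  mem_closure_word _ x

lemma mem_Fm_iff (x : FreeGroup (Fin n)) :
    x ∈ Fm2sub n ↔ ∀ l ∈ x.toWord, 2 ≤ (l.1 : ℕ) :=
  mem_closure_word _ x

/-- `w` with no initial `F_2`-segment starts with a letter of index ≥ 2 (if any). -/
lemma hdHi_of_noInit {w : FreeGroup (Fin n)} (h : NoInitialSegment (F2sub n) w) :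
    ∀ l ∈ w.toWord.head?, 2 ≤ (l.1 : ℕ) := by
  intro l hl
  by_contra hlow
  push_neg at hlow
  have hch := chain'_toWord w
  rcases hL : w.toWord with _ | ⟨x, t⟩
  · rw [hL] at hl; simp at hl
  · rw [hL] at hl
    simp only [List.head?_cons, Option.mem_some_iff] at hl
    subst hl
    rw [hL] at hch
    have htW : (FreeGroup.mk t).toWord = t :=
      FreeGroup.toWord_mk.trans (reduce_eq_self hch.tail)
    have haW : (FreeGroup.mk [x]).toWord = [x] := FreeGroup.toWord_mk
    refine h (FreeGroup.mk [x]) ?_ ?_ (FreeGroup.mk t) ?_ ?_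
    · rw [mem_F2_iff, haW]
      intro l' hl'
      simp at hl'
      subst hl'
      exact hlow
    · intro h1
      rw [h1, FreeGroup.toWord_one] at haW
      simp at haW
    · rw [FreeGroup.mul_mk, show ([x] ++ t) = x :: t from rfl, ← hL, FreeGroup.mk_toWord]
    · rw [hL, haW, htW]
      simp [Nat.add_comm]

lemma not_of_head?_dropWhile {β : Type*} (p : β → Bool) :
    ∀ (L : List β), ∀ l ∈ (L.dropWhile p).head?, ¬ p l = true := by
  intro L
  induction L with
  | nil => simp
  | cons a t ih =>
    by_cases h : p a
    · rw [List.dropWhile_cons_of_pos h]; exact ih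
    · rw [List.dropWhile_cons_of_neg h]
      intro l hl
      simp only [List.head?_cons, Option.mem_some_iff] at hl
      subst hl
      exact h

lemma head_mul_cross (x y : FreeGroup (Fin n)) (hx : x.toWord ≠ [])
    (hxl : ∀ l ∈ x.toWord.getLast?, (l.1 : ℕ) < 2)
    (hyh : ∀ l ∈ y.toWord.head?, 2 ≤ (l.1 : ℕ)) :
    (x * y).toWord ≠ [] ∧ (x * y).toWord.head? = x.toWord.head? := by
  refine head_mul x y hx ?_
  intro a ha b hb heq
  have h1 := hxl a ha
  have h2 := hyh b hb
  have : (a.1 : ℕ) = (b.1 : ℕ) := by rw [heq]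
  omega

lemma head_mul_cross' (x y : FreeGroup (Fin n)) (hx : x.toWord ≠ [])
    (hxl : ∀ l ∈ x.toWord.getLast?, 2 ≤ (l.1 : ℕ))
    (hyh : ∀ l ∈ y.toWord.head?, (l.1 : ℕ) < 2) :
    (x * y).toWord ≠ [] ∧ (x * y).toWord.head? = x.toWord.head? := by
  refine head_mul x y hx ?_
  intro a ha b hb heq
  have h1 := hxl a ha
  have h2 := hyh b hb
  have : (a.1 : ℕ) = (b.1 : ℕ) := by rw [heq]
  omega

/-- The key induction: processing `w'` block by block. -/
lemma main_ind (μ : MulAut (FreeGroup (Fin n))) (a' v v₀ d : FreeGroup (Fin n))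
    (ha' : a' ∈ F2sub n)
    (hμF2 : ∀ x ∈ F2sub n, μ x = a' * x * a'⁻¹)
    (hμFm : ∀ x ∈ Fm2sub n, μ x = v * x * v⁻¹)
    (hvd : v = v₀ * d) (hdmem : d ∈ Fm2sub n)
    (hv₀h : ∀ l ∈ v₀.toWord.head?, 2 ≤ (l.1 : ℕ))
    (hv₀l : ∀ l ∈ v₀.toWord.getLast?, (l.1 : ℕ) < 2) :
    ∀ N (w' : FreeGroup (Fin n)), w'.toWord.length ≤ N →
      (∀ l ∈ w'.toWord.head?, 2 ≤ (l.1 : ℕ)) →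
      ∃ y, μ w' * v = v₀ * y ∧ (∀ l ∈ y.toWord.head?, 2 ≤ (l.1 : ℕ)) ∧
        ((∃ l ∈ w'.toWord, (l.1 : ℕ) < 2) → y ≠ 1) := by
  have hdhi : ∀ l ∈ d.toWord, 2 ≤ (l.1 : ℕ) := (mem_Fm_iff d).1 hdmem
  -- trivial case helper
  have triv : ∀ w' : FreeGroup (Fin n), w'.toWord = [] →
      ∃ y, μ w' * v = v₀ * y ∧ (∀ l ∈ y.toWord.head?, 2 ≤ (l.1 : ℕ)) ∧
        ((∃ l ∈ w'.toWord, (l.1 : ℕ) < 2) → y ≠ 1) := by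
    intro w' hnil
    have hw1 : w' = 1 := FreeGroup.toWord_eq_nil_iff.1 hnil
    refine ⟨d, ?_, ?_, ?_⟩
    · rw [hw1]
      simp only [_root_.map_one, one_mul]
      exact hvd
    · intro l hl; exact hdhi l (List.mem_of_mem_head? hl)
    · rintro ⟨l, hl, -⟩
      rw [hnil] at hl
      simp at hl
  intro N
  induction N with
  | zero =>
    intro w' hlen _
    exact triv w' (List.eq_nil_of_length_eq_zero (Nat.le_zero.1 hlen))
  | succ N ih =>
    intro w' hlen hhd
    rcases hL : w'.toWord with _ | ⟨x, t⟩
    · obtain ⟨y, h1, h2, -⟩ := triv w' hL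
      refine ⟨y, h1, h2, ?_⟩
      rintro ⟨l, hl, -⟩
      simp at hl
    · have hxhi : 2 ≤ (x.1 : ℕ) := hhd x (by rw [hL]; simp)
      classical
      set hiB : Fin n × Bool → Bool := fun l => decide (2 ≤ (l.1 : ℕ)) with hhiB
      set loB : Fin n × Bool → Bool := fun l => decide ((l.1 : ℕ) < 2) with hloB
      obtain ⟨hsplit1, hAW, hBW⟩ := split_word w' hiB
      set A := w'.toWord.takeWhile hiB with hA
      set B := w'.toWord.dropWhile hiB with hB
      have hABlen : A.length + B.length = w'.toWord.length := by
        rw [← List.length_append, List.takeWhile_append_dropWhile]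
      have hAne : A ≠ [] := by
        rw [hA, hL, List.takeWhile_cons_of_pos (by simp [hhiB]; omega)]
        simp
      have humem : FreeGroup.mk A ∈ Fm2sub n := by
        rw [mem_Fm_iff, hAW]
        intro l hl
        have := List.mem_takeWhile_imp hl
        simpa [hhiB] using this
      have hune : FreeGroup.mk A ≠ 1 := by
        intro h
        rw [h, FreeGroup.toWord_one] at hAW
        exact hAne hAW.symm
      rcases hBc : B with _ | ⟨b, s⟩
      · -- w' is a single high block
        have hw'u : w' = FreeGroup.mk A := by
          rw [hsplit1, hBc]
          rw [show FreeGroup.mk ([] : List (Fin n × Bool)) = 1 from (FreeGroup.one_eq_mk).symm]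
          rw [mul_one]
        refine ⟨d * FreeGroup.mk A, ?_, ?_, ?_⟩
        · rw [hw'u, hμFm _ humem, hvd]
          group
        · intro l hl
          have hmem : d * FreeGroup.mk A ∈ Fm2sub n := mul_mem hdmem humem
          exact (mem_Fm_iff _).1 hmem l (List.mem_of_mem_head? hl)
        · rintro ⟨l, hl, hllow⟩
          exfalso
          have hWA : A ++ B = w'.toWord := by
            rw [hA, hB]; exact List.takeWhile_append_dropWhile
          have hl' : l ∈ A := by
            have h' : l ∈ A ++ B := by rw [hWA, hL]; exact hl
            rwa [hBc, List.append_nil] at h'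
          have := List.mem_takeWhile_imp (hA ▸ hl')
          simp [hhiB] at this
          omega
      · -- w' = u * z * w''
        have hblo : (b.1 : ℕ) < 2 := by
          have := not_of_head?_dropWhile hiB w'.toWord b (by rw [← hB, hBc]; simp)
          simp [hhiB] at this
          omega
        obtain ⟨hsplit2, hCW, hDW⟩ := split_word (FreeGroup.mk B) loB
        rw [hBW] at hsplit2 hCW hDW
        set C := B.takeWhile loB with hC
        set D := B.dropWhile loB with hD
        have hCDlen : C.length + D.length = B.length := by
          rw [← List.length_append, List.takeWhile_append_dropWhile]
        have hCne : C ≠ [] := by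
          rw [hC, hBc, List.takeWhile_cons_of_pos (by simp [hloB]; omega)]
          simp
        have hzF2 : FreeGroup.mk C ∈ F2sub n := by
          rw [mem_F2_iff, hCW]
          intro l hl
          have := List.mem_takeWhile_imp hl
          simpa [hloB] using this
        have hzne : FreeGroup.mk C ≠ 1 := by
          intro h
          rw [h, FreeGroup.toWord_one] at hCW
          exact hCne hCW.symm
        have hhd'' : ∀ l ∈ (FreeGroup.mk D).toWord.head?, 2 ≤ (l.1 : ℕ) := by
          intro l hl
          rw [hDW] at hl
          have := not_of_head?_dropWhile loB B l hl
          simp [hloB] at this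
          omega
        have hlenD : (FreeGroup.mk D).toWord.length ≤ N := by
          rw [hDW]
          have h1 : 1 ≤ A.length := List.length_pos_iff.2 hAne
          have h2 : 1 ≤ C.length := List.length_pos_iff.2 hCne
          rw [hL] at hlen
          rw [hL] at hABlen
          rw [hBc] at hCDlen hABlen
          simp at hlen hABlen hCDlen
          omega
        obtain ⟨y'', hy1, hy2, -⟩ := ih (FreeGroup.mk D) hlenD hhd''
        -- the pieces
        set u := FreeGroup.mk A
        set z := FreeGroup.mk C
        set w'' := FreeGroup.mk D
        set qq := μ z with hqq
        have hqmem : qq ∈ F2sub n := by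
          rw [hqq, hμF2 z hzF2]
          exact mul_mem (mul_mem ha' hzF2) (inv_mem ha')
        have hqlo : ∀ l ∈ qq.toWord, (l.1 : ℕ) < 2 := (mem_F2_iff qq).1 hqmem
        have hqne : qq ≠ 1 := by
          intro h
          have h2 : μ z = μ 1 := by rw [← hqq, h, _root_.map_one]
          exact hzne (μ.injective h2)
        have hqword : qq.toWord ≠ [] := fun h => hqne (FreeGroup.toWord_eq_nil_iff.1 h)
        set m := d * u * d⁻¹ with hm
        have hmmem : m ∈ Fm2sub n := mul_mem (mul_mem hdmem humem) (inv_mem hdmem)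
        have hmhi : ∀ l ∈ m.toWord, 2 ≤ (l.1 : ℕ) := (mem_Fm_iff m).1 hmmem
        have hmne : m ≠ 1 := by
          intro h
          apply hune
          have : u = d⁻¹ * (d * u * d⁻¹) * d := by group
          rw [← hm, h] at this
          simpa using this
        have hmword : m.toWord ≠ [] := fun h => hmne (FreeGroup.toWord_eq_nil_iff.1 h)
        -- chain of concatenations
        have ht₁h : ∀ l ∈ (v₀ * y'').toWord.head?, 2 ≤ (l.1 : ℕ) := by
          by_cases hv₀ : v₀.toWord = []
          · have : v₀ = 1 := FreeGroup.toWord_eq_nil_iff.1 hv₀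
            rw [this, one_mul]
            exact hy2
          · obtain ⟨-, hhd'⟩ := head_mul_cross v₀ y'' hv₀ hv₀l hy2
            rw [hhd']
            exact hv₀h
        obtain ⟨ht₂ne, ht₂hd⟩ := head_mul_cross qq (v₀ * y'') hqword
          (fun l hl => hqlo l (List.mem_of_mem_getLast? hl)) ht₁h
        have ht₂lo : ∀ l ∈ (qq * (v₀ * y'')).toWord.head?, (l.1 : ℕ) < 2 := by
          rw [ht₂hd]
          intro l hl
          exact hqlo l (List.mem_of_mem_head? hl)
        have hz₂ : (v₀⁻¹ * (qq * (v₀ * y''))).toWord ≠ [] ∧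
            (∀ l ∈ (v₀⁻¹ * (qq * (v₀ * y''))).toWord.head?, (l.1 : ℕ) < 2) := by
          by_cases hv₀ : v₀.toWord = []
          · have hv1 : v₀ = 1 := FreeGroup.toWord_eq_nil_iff.1 hv₀
            rw [hv1, inv_one, one_mul]
            rw [hv1] at ht₂ne ht₂lo
            exact ⟨ht₂ne, ht₂lo⟩
          · have hinvne : (v₀⁻¹).toWord ≠ [] := by
              intro h
              have h1 : v₀⁻¹ = 1 := FreeGroup.toWord_eq_nil_iff.1 h
              have h2 : v₀ = 1 := by rwa [inv_eq_one] at h1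
              exact hv₀ (by rw [h2, FreeGroup.toWord_one])
            have hinvlast : ∀ l ∈ (v₀⁻¹).toWord.getLast?, 2 ≤ (l.1 : ℕ) := by
              intro l hl
              rw [getLast?_toWord_inv] at hl
              simp only [Option.mem_def, Option.map_eq_some_iff] at hl
              obtain ⟨c, hc, rfl⟩ := hl
              exact hv₀h c hc
            obtain ⟨h1, h2⟩ := head_mul_cross' v₀⁻¹ (qq * (v₀ * y'')) hinvne hinvlast ht₂lo
            refine ⟨h1, ?_⟩
            rw [h2]
            intro l hl
            rw [head?_toWord_inv] at hl
            simp only [Option.mem_def, Option.map_eq_some_iff] at hl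
            obtain ⟨c, hc, rfl⟩ := hl
            exact hv₀l c hc
        obtain ⟨hy'ne, hy'hd⟩ := head_mul_cross' m (v₀⁻¹ * (qq * (v₀ * y''))) hmword
          (fun l hl => hmhi l (List.mem_of_mem_getLast? hl)) hz₂.2
        refine ⟨m * (v₀⁻¹ * (qq * (v₀ * y''))), ?_, ?_, fun _ => ?_⟩
        · have hw'eq : w' = u * (z * w'') := by rw [hsplit1, hsplit2]
          rw [hw'eq, _root_.map_mul, _root_.map_mul, mul_assoc, mul_assoc, ← hqq, hy1,
            hμFm u humem, hvd, hm]
          group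
        · rw [hy'hd]
          intro l hl
          exact hmhi l (List.mem_of_mem_head? hl)
        · exact fun h => hy'ne (by rw [h, FreeGroup.toWord_one])

end SplitOutAux

/-- Normal form argument in the proof that `splitOut ≅ Aut(F_2) × Aut(F_{n-2})`:
if `η̂` restricts to conjugation by `a ∈ F_2` on `F_2` and to conjugation by `w`
on `F_{n-2}` where `w` has no nontrivial initial `F_2`-segment, its outer class
has an inverse represented by `μ̂` restricting to conjugation by `a' ∈ F_2` on
`F_2` and by `v` (beginning in `F_{n-2}`) on `F_{n-2}`, and `μ̂(w)·v ∈ F_2`,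
then `w ∈ F_{n-2}` (and hence `η̂ = i_a × i_w`). -/
theorem splitOut_normal_form (n : ℕ) (hn : 4 ≤ n)
    (η μ : MulAut (FreeGroup (Fin n)))
    (a a' : FreeGroup (Fin n)) (ha : a ∈ F2sub n) (ha' : a' ∈ F2sub n)
    (w v : FreeGroup (Fin n))
    (hwinit : NoInitialSegment (F2sub n) w)
    (hvinit : NoInitialSegment (F2sub n) v)
    (hηF2 : ∀ x ∈ F2sub n, η x = a * x * a⁻¹)
    (hηFm : ∀ x ∈ Fm2sub n, η x = w * x * w⁻¹)
    (hμF2 : ∀ x ∈ F2sub n, μ x = a' * x * a'⁻¹)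
    (hμFm : ∀ x ∈ Fm2sub n, μ x = v * x * v⁻¹)
    (hinv : ∃ c : FreeGroup (Fin n), ∀ x, μ (η x) = c * x * c⁻¹)
    (hkey : μ w * v ∈ F2sub n) :
    w ∈ Fm2sub n := by
  classical
  have hwh := SplitOutAux.hdHi_of_noInit hwinit
  have hvh := SplitOutAux.hdHi_of_noInit hvinit
  set hiB : Fin n × Bool → Bool := fun l => decide (2 ≤ (l.1 : ℕ)) with hhiB
  obtain ⟨hs, hAW, hBW⟩ := SplitOutAux.split_word v⁻¹ hiB
  set A' := (v⁻¹).toWord.takeWhile hiB with hA'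
  set B' := (v⁻¹).toWord.dropWhile hiB with hB'
  set d := (FreeGroup.mk A')⁻¹ with hd
  set v₀ := (FreeGroup.mk B')⁻¹ with hv₀def
  have hvd : v = v₀ * d := by
    rw [hv₀def, hd, ← mul_inv_rev, ← hs, inv_inv]
  have hdmem : d ∈ Fm2sub n := by
    rw [hd]
    refine inv_mem ?_
    rw [SplitOutAux.mem_Fm_iff, hAW]
    intro l hl
    have := List.mem_takeWhile_imp hl
    simpa [hhiB] using this
  have hv₀l : ∀ l ∈ v₀.toWord.getLast?, (l.1 : ℕ) < 2 := by
    intro l hl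
    rw [hv₀def, SplitOutAux.getLast?_toWord_inv, hBW] at hl
    simp only [Option.mem_def, Option.map_eq_some_iff] at hl
    obtain ⟨c, hc, rfl⟩ := hl
    have := SplitOutAux.not_of_head?_dropWhile hiB (v⁻¹).toWord c (by rw [← hB']; exact hc)
    simp [hhiB] at this
    have hgoal : ((c.1, !c.2).1 : ℕ) = (c.1 : ℕ) := rfl
    omega
  have hv₀h : ∀ l ∈ v₀.toWord.head?, 2 ≤ (l.1 : ℕ) := by
    intro l hl
    rw [hv₀def, SplitOutAux.head?_toWord_inv, hBW] at hl
    simp only [Option.mem_def, Option.map_eq_some_iff] at hl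
    obtain ⟨c, hc, rfl⟩ := hl
    have hBne : B' ≠ [] := by intro h; rw [h] at hc; simp at hc
    have hlast : (v⁻¹).toWord.getLast? = some c := by
      conv_lhs => rw [← List.takeWhile_append_dropWhile (p := hiB) (l := (v⁻¹).toWord)]
      rw [List.getLast?_append_of_ne_nil _ (by rw [← hB']; exact hBne)]
      rw [← hB']; exact hc
    rw [SplitOutAux.getLast?_toWord_inv] at hlast
    rcases h2 : v.toWord.head? with _ | c₀
    · rw [h2] at hlast; simp at hlast
    · rw [h2] at hlast
      simp only [Option.map_some, Option.some_inj] at hlast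
      have hc₀ := hvh c₀ (by rw [h2]; rfl)
      rw [← hlast]
      exact hc₀
  obtain ⟨y, hy1, hy2, hy3⟩ := SplitOutAux.main_ind μ a' v v₀ d ha' hμF2 hμFm hvd hdmem
    hv₀h hv₀l w.toWord.length w le_rfl hwh
  rw [SplitOutAux.mem_Fm_iff]
  by_contra hwm
  push_neg at hwm
  obtain ⟨l, hl, hlo⟩ := hwm
  have hyne : y ≠ 1 := hy3 ⟨l, hl, by omega⟩
  have hflo : ∀ l' ∈ (v₀ * y).toWord, (l'.1 : ℕ) < 2 := by
    rw [← hy1]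
    exact (SplitOutAux.mem_F2_iff _).1 hkey
  have hyw : y.toWord ≠ [] := fun h => hyne (FreeGroup.toWord_eq_nil_iff.1 h)
  rcases hyL : y.toWord with _ | ⟨l₀, t₀⟩
  · exact hyw hyL
  · have hl₀hi : 2 ≤ (l₀.1 : ℕ) := hy2 l₀ (by rw [hyL]; rfl)
    by_cases hv₀nil : v₀.toWord = []
    · have hv1 : v₀ = 1 := FreeGroup.toWord_eq_nil_iff.1 hv₀nil
      have := hflo l₀ (by rw [hv1, one_mul, hyL]; simp)
      omega
    · have hcat := SplitOutAux.toWord_mul_eq v₀ y (by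
        intro p hp q hq heq
        have h1 := hv₀l p hp
        have h2 := hy2 q hq
        have : (p.1 : ℕ) = (q.1 : ℕ) := by rw [heq]
        omega)
      have hmem : l₀ ∈ (v₀ * y).toWord := by rw [hcat, hyL]; simp
      have := hflo l₀ hmem
      omega
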